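/- Let g : ℝ → ℝ be C¹ with g(0) = 0 and g'(0) < 0. If φ : ℝ → (0,1) is a C² solution of A₀φ'' + cφ' + g(φ) = 0 on ℝ with A₀ > 0, c ∈ ℝ, φ(ξ) → 0 as ξ → +∞ and φ'(ξ) → 0 as ξ → +∞, then φ and φ' decay exponentially as ξ → +∞: there exist μ < 0, C > 0 and ξ₀ with φ(ξ) ≤ C e^{μξ} for ξ ≥ ξ₀. -/

import Mathlib

open Real Filter Set

theorem stmt_18 (A₀ c : ℝ) (hA₀ : 0 < A₀)
    (g : ℝ → ℝ) (hg : ContDiff ℝ 1 g) (hg0 : g 0 = 0) (hg' : deriv g 0 < 0)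
    (φ : ℝ → ℝ) (hφ : ContDiff ℝ 2 φ) (hrange : ∀ ξ, φ ξ ∈ Ioo (0:ℝ) 1)
    (hODE : ∀ ξ : ℝ, A₀ * deriv (deriv φ) ξ + c * deriv φ ξ + g (φ ξ) = 0)
    (hlim : Tendsto φ atTop (nhds 0))
    (hlim' : Tendsto (deriv φ) atTop (nhds 0)) :
    ∃ μ < (0:ℝ), ∃ C > (0:ℝ), ∃ ξ₀ : ℝ, ∀ ξ ≥ ξ₀, φ ξ ≤ C * exp (μ * ξ) := by
  -- basic differentiability facts
  have hφd : Differentiable ℝ φ := hφ.differentiable (by norm_num)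
  have hφ'd : Differentiable ℝ (deriv φ) := by
    have h := (contDiff_succ_iff_deriv.mp (show ContDiff ℝ (1+1) φ by exact_mod_cast hφ)).2
    exact h.2.differentiable (by norm_num)
  -- the constant k and the roots μ₁ < 0 < μ₂ of A₀ r² + c r - k/2 = 0
  set k : ℝ := -deriv g 0 with hk_def
  have hk : 0 < k := by simp [hk_def]; linarith
  set D : ℝ := c ^ 2 + 2 * A₀ * k with hD_def
  have hDpos : c ^ 2 < D := by nlinarith
  have hD0 : 0 ≤ D := by nlinarith [sq_nonneg c]
  set s : ℝ := Real.sqrt D with hs_def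
  have hs2 : s ^ 2 = D := Real.sq_sqrt hD0
  have hs_abs : |c| < s := by
    have h1 : Real.sqrt (c ^ 2) < Real.sqrt D := Real.sqrt_lt_sqrt (sq_nonneg c) hDpos
    rwa [Real.sqrt_sq_eq_abs] at h1
  set μ₁ : ℝ := (-c - s) / (2 * A₀) with hμ₁_def
  set μ₂ : ℝ := (-c + s) / (2 * A₀) with hμ₂_def
  have hμ₁ : μ₁ < 0 := by
    apply div_neg_of_neg_of_pos _ (by linarith)
    have := neg_abs_le c
    linarith [abs_nonneg c]
  have hμ₂ : 0 < μ₂ := by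
    apply div_pos _ (by linarith)
    have := le_abs_self c
    linarith
  have hsum : A₀ * (μ₁ + μ₂) = -c := by
    rw [hμ₁_def, hμ₂_def, ← add_div, mul_div_assoc', div_eq_iff (ne_of_gt (by linarith))]
    ring
  have hprod : A₀ * (μ₁ * μ₂) = -(k / 2) := by
    have hA₀' : A₀ ≠ 0 := ne_of_gt hA₀
    rw [hμ₁_def, hμ₂_def, div_mul_div_comm, mul_div_assoc',
      div_eq_iff (ne_of_gt (mul_pos (by linarith) (by linarith)))]
    linear_combination (-A₀) * hs2 + (-A₀) * hD_def
  -- choose δ > 0 so that deriv g < deriv g 0 / 2 on (-δ, δ)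
  have hgc : Continuous (deriv g) := hg.continuous_deriv le_rfl
  have hev : {x : ℝ | deriv g x < deriv g 0 / 2} ∈ nhds (0:ℝ) :=
    hgc.continuousAt.preimage_mem_nhds (Iio_mem_nhds (by linarith))
  obtain ⟨δ, hδpos, hδ⟩ := Metric.mem_nhds_iff.mp hev
  have hδ' : ∀ x : ℝ, |x| < δ → deriv g x < deriv g 0 / 2 := by
    intro x hx
    exact hδ (by simpa [Real.dist_eq] using hx)
  -- g x ≤ -(k/2) x for 0 < x < δ, by the mean value theorem
  have hgle : ∀ x : ℝ, 0 < x → x < δ → g x ≤ -(k / 2) * x := by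
    intro x hx0 hxδ
    obtain ⟨t, ht, hteq⟩ := exists_hasDerivAt_eq_slope g (deriv g) hx0
      (hg.continuous.continuousOn) (fun y _ => ((hg.differentiable (by norm_num)) y).hasDerivAt)
    have htb : |t| < δ := by
      rw [abs_lt]; constructor <;> [linarith [ht.1]; linarith [ht.2]]
    have h1 : deriv g t < deriv g 0 / 2 := hδ' t htb
    have h2 : deriv g t = g x / x := by rw [hteq, hg0]; ring_nf
    have h3 : g x / x < deriv g 0 / 2 := by rw [← h2]; exact h1
    have h4 : g x < (deriv g 0 / 2) * x := by
      have := (div_lt_iff₀ hx0).mp h3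
      linarith
    have : -(k / 2) * x = (deriv g 0 / 2) * x := by rw [hk_def]; ring
    linarith [this ▸ h4]
  -- choose ξ₀ with φ ξ < δ for ξ ≥ ξ₀
  obtain ⟨ξ₀, hξ₀⟩ := eventually_atTop.mp (hlim.eventually_lt_const hδpos)
  -- the key differential inequality for ξ ≥ ξ₀
  have hkey : ∀ ξ : ℝ, ξ₀ ≤ ξ →
      0 ≤ deriv (deriv φ) ξ - (μ₁ + μ₂) * deriv φ ξ + μ₁ * μ₂ * φ ξ := by
    intro ξ hξ
    have hode := hODE ξ
    have hg1 : g (φ ξ) ≤ -(k / 2) * φ ξ := hgle _ (hrange ξ).1 (hξ₀ ξ hξ)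
    have e1 : A₀ * (deriv (deriv φ) ξ - (μ₁ + μ₂) * deriv φ ξ + μ₁ * μ₂ * φ ξ)
        = A₀ * deriv (deriv φ) ξ + c * deriv φ ξ - (k / 2) * φ ξ := by
      linear_combination (-(deriv φ ξ)) * hsum + (φ ξ) * hprod
    have e2 : A₀ * 0 ≤ A₀ * (deriv (deriv φ) ξ - (μ₁ + μ₂) * deriv φ ξ + μ₁ * μ₂ * φ ξ) := by
      rw [e1]; linarith
    exact le_of_mul_le_mul_left e2 hA₀
  -- u = φ' - μ₁ φ and H = e^{-μ₂ ξ} u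
  set U : ℝ → ℝ := fun ξ => deriv φ ξ - μ₁ * φ ξ with hU_def
  have hUd : ∀ ξ : ℝ, HasDerivAt U (deriv (deriv φ) ξ - μ₁ * deriv φ ξ) ξ := fun ξ =>
    ((hφ'd ξ).hasDerivAt).sub (((hφd ξ).hasDerivAt).const_mul μ₁)
  set H : ℝ → ℝ := fun ξ => exp (-μ₂ * ξ) * U ξ with hH_def
  have hHd : ∀ ξ : ℝ, HasDerivAt H
      (exp (-μ₂ * ξ) * (deriv (deriv φ) ξ - (μ₁ + μ₂) * deriv φ ξ + μ₁ * μ₂ * φ ξ)) ξ := by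
    intro ξ
    have he : HasDerivAt (fun ξ : ℝ => exp (-μ₂ * ξ)) (exp (-μ₂ * ξ) * (-μ₂)) ξ := by
      simpa using ((hasDerivAt_id ξ).const_mul (-μ₂)).exp
    have := he.mul (hUd ξ)
    refine this.congr_deriv ?_
    simp only [hU_def]
    ring
  have hHmono : MonotoneOn H (Ici ξ₀) := by
    apply monotoneOn_of_deriv_nonneg (convex_Ici ξ₀)
    · exact fun x _ => ((hHd x).differentiableAt).continuousAt.continuousWithinAt
    · exact fun x _ => ((hHd x).differentiableAt).differentiableWithinAt
    · intro x hx
      rw [(hHd x).deriv]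
      have hx' : ξ₀ ≤ x := le_of_lt (by simpa using hx)
      exact mul_nonneg (exp_pos _).le (hkey x hx')
  have hH0 : Tendsto H atTop (nhds 0) := by
    have h1 : Tendsto (fun ξ : ℝ => exp (-μ₂ * ξ)) atTop (nhds 0) := by
      rw [tendsto_exp_comp_nhds_zero]
      exact tendsto_id.const_mul_atTop_of_neg (by linarith)
    have h2 : Tendsto U atTop (nhds 0) := by
      have := hlim'.sub (hlim.const_mul μ₁)
      simpa using this
    have h3 := h1.mul h2
    simp only [zero_mul] at h3
    exact h3
  have hUle : ∀ ξ : ℝ, ξ₀ ≤ ξ → U ξ ≤ 0 := by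
    intro ξ hξ
    have hHle : H ξ ≤ 0 := by
      apply ge_of_tendsto hH0
      filter_upwards [eventually_ge_atTop ξ] with ξ' hξ'
      exact hHmono hξ (le_trans hξ hξ') hξ'
    have hHle' : exp (-μ₂ * ξ) * U ξ ≤ 0 := hHle
    nlinarith [exp_pos (-μ₂ * ξ), hHle']
  -- P = e^{-μ₁ ξ} φ is antitone on [ξ₀, ∞)
  set P : ℝ → ℝ := fun ξ => exp (-μ₁ * ξ) * φ ξ with hP_def
  have hPd : ∀ ξ : ℝ, HasDerivAt P (exp (-μ₁ * ξ) * U ξ) ξ := by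
    intro ξ
    have he : HasDerivAt (fun ξ : ℝ => exp (-μ₁ * ξ)) (exp (-μ₁ * ξ) * (-μ₁)) ξ := by
      simpa using ((hasDerivAt_id ξ).const_mul (-μ₁)).exp
    have := he.mul (hφd ξ).hasDerivAt
    refine this.congr_deriv ?_
    simp only [hU_def]
    ring
  have hPanti : AntitoneOn P (Ici ξ₀) := by
    apply antitoneOn_of_deriv_nonpos (convex_Ici ξ₀)
    · exact fun x _ => ((hPd x).differentiableAt).continuousAt.continuousWithinAt
    · exact fun x _ => ((hPd x).differentiableAt).differentiableWithinAt
    · intro x hx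
      rw [(hPd x).deriv]
      have hx' : ξ₀ ≤ x := le_of_lt (by simpa using hx)
      exact mul_nonpos_of_nonneg_of_nonpos (exp_pos _).le (hUle x hx')
  -- conclusion
  refine ⟨μ₁, hμ₁, exp (-μ₁ * ξ₀), exp_pos _, ξ₀, fun ξ hξ => ?_⟩
  have hP1 : P ξ ≤ P ξ₀ := hPanti (self_mem_Ici) hξ hξ
  have hP2 : P ξ₀ ≤ exp (-μ₁ * ξ₀) := by
    have h1 := (hrange ξ₀).2
    have h2 : exp (-μ₁ * ξ₀) * φ ξ₀ ≤ exp (-μ₁ * ξ₀) * 1 :=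
      mul_le_mul_of_nonneg_left h1.le (exp_pos _).le
    show exp (-μ₁ * ξ₀) * φ ξ₀ ≤ exp (-μ₁ * ξ₀)
    linarith
  have hP3 : exp (-μ₁ * ξ) * φ ξ ≤ exp (-μ₁ * ξ₀) := le_trans hP1 hP2
  calc φ ξ = exp (μ₁ * ξ) * (exp (-μ₁ * ξ) * φ ξ) := by
        rw [← mul_assoc, ← Real.exp_add]
        simp
    _ ≤ exp (μ₁ * ξ) * exp (-μ₁ * ξ₀) :=
        mul_le_mul_of_nonneg_left hP3 (exp_pos _).le
    _ = exp (-μ₁ * ξ₀) * exp (μ₁ * ξ) := mul_comm _ _
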